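/- Let E and F be orthogonal complementary subspaces of ℝᵈ and let φ : ℝᵈ → ℝᵈ be a C¹ map of the form φ(u,v) = (u, θ(u,v)) for (u,v) ∈ E × F. Let A_E : E → E and A_F : F → F be invertible linear maps with ‖A_F‖·‖A_E⁻¹‖ ≤ 1 and A_F conformal (A_F = α·I with I an isometry). Then the conjugate φ̄ = A^ℓ ∘ φ⁻¹ ∘ A^{−ℓ}, where A = (A_E, A_F), satisfies ‖Dφ̄ − Id‖₀ ≤ ‖Dφ⁻¹ − Id‖₀, for every ℓ ≥ 0. -/

import Mathlib

variable {d₁ d₂ : ℕ}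

local notation "E₁" => EuclideanSpace ℝ (Fin d₁)
local notation "E₂" => EuclideanSpace ℝ (Fin d₂)
local notation "P" => WithLp 2 (EuclideanSpace ℝ (Fin d₁) × EuclideanSpace ℝ (Fin d₂))

noncomputable def LL (A_E : E₁ ≃L[ℝ] E₁) (A_F : E₂ ≃L[ℝ] E₂) : P ≃L[ℝ] P :=
  (WithLp.prodContinuousLinearEquiv 2 ℝ E₁ E₂).trans
    ((A_E.prodCongr A_F).trans (WithLp.prodContinuousLinearEquiv 2 ℝ E₁ E₂).symm)

lemma LL_apply (A_E : E₁ ≃L[ℝ] E₁) (A_F : E₂ ≃L[ℝ] E₂) (x : P) :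
    LL A_E A_F x = (WithLp.equiv 2 _).symm (A_E x.fst, A_F x.snd) := by
  rfl

lemma LL_symm_apply (A_E : E₁ ≃L[ℝ] E₁) (A_F : E₂ ≃L[ℝ] E₂) (x : P) :
    (LL A_E A_F).symm x = (WithLp.equiv 2 _).symm (A_E.symm x.fst, A_F.symm x.snd) := by
  rfl

lemma LL_fst (A_E : E₁ ≃L[ℝ] E₁) (A_F : E₂ ≃L[ℝ] E₂) (x : P) :
    (LL A_E A_F x).fst = A_E x.fst := rfl

lemma LL_snd (A_E : E₁ ≃L[ℝ] E₁) (A_F : E₂ ≃L[ℝ] E₂) (x : P) :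
    (LL A_E A_F x).snd = A_F x.snd := rfl

lemma conj_norm_le (A_E : E₁ ≃L[ℝ] E₁) (A_F : E₂ ≃L[ℝ] E₂)
    (hnorm : ‖(A_F : E₂ →L[ℝ] E₂)‖ * ‖(A_E.symm : E₁ →L[ℝ] E₁)‖ ≤ 1)
    (α : ℝ) (hα : 0 < α) (hconf : ∀ v, ‖A_F v‖ = α * ‖v‖)
    (N : P →L[ℝ] P) (hN : ∀ x : P, (N x).fst = 0) :
    ‖((LL A_E A_F : P →L[ℝ] P).comp N).comp ((LL A_E A_F).symm : P →L[ℝ] P)‖ ≤ ‖N‖ := by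
  have hAFle : ‖(A_F : E₂ →L[ℝ] E₂)‖ ≤ α := by
    apply ContinuousLinearMap.opNorm_le_bound _ hα.le
    intro v; rw [show (A_F : E₂ →L[ℝ] E₂) v = A_F v from rfl, hconf]
  apply ContinuousLinearMap.opNorm_le_bound _ (norm_nonneg N)
  intro x
  set y : P := (LL A_E A_F).symm x with hy
  have hval : (((LL A_E A_F : P →L[ℝ] P).comp N).comp ((LL A_E A_F).symm : P →L[ℝ] P)) x
      = LL A_E A_F (N y) := rfl
  rw [hval]
  -- norm of L (N y)
  have hNyfst : (N y).fst = 0 := hN y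
  have hnormsq : ∀ z : P, ‖z‖ ^ 2 = ‖z.fst‖ ^ 2 + ‖z.snd‖ ^ 2 := fun z =>
    WithLp.prod_norm_sq_eq_of_L2 z
  have h1 : ‖LL A_E A_F (N y)‖ = ‖A_F (N y).snd‖ := by
    have := hnormsq (LL A_E A_F (N y))
    rw [LL_fst, LL_snd, hNyfst, map_zero, norm_zero] at this
    have h2 : (0:ℝ) ≤ ‖LL A_E A_F (N y)‖ := norm_nonneg _
    nlinarith [norm_nonneg (A_F (N y).snd)]
  have hNy : ‖N y‖ = ‖(N y).snd‖ := by
    have := hnormsq (N y)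
    rw [hNyfst, norm_zero] at this
    nlinarith [norm_nonneg (N y), norm_nonneg ((N y).snd)]
  have hkey : ‖(A_F : E₂ →L[ℝ] E₂)‖ * ‖y‖ ≤ ‖x‖ := by
    have hysq : ‖y‖ ^ 2 = ‖A_E.symm x.fst‖ ^ 2 + ‖A_F.symm x.snd‖ ^ 2 := by
      have := hnormsq y
      rw [hy, show ((LL A_E A_F).symm x).fst = A_E.symm x.fst from rfl,
        show ((LL A_E A_F).symm x).snd = A_F.symm x.snd from rfl] at this
      exact this
    have hxsq : ‖x‖ ^ 2 = ‖x.fst‖ ^ 2 + ‖x.snd‖ ^ 2 := hnormsq x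
    have hE : ‖A_E.symm x.fst‖ ≤ ‖(A_E.symm : E₁ →L[ℝ] E₁)‖ * ‖x.fst‖ :=
      (A_E.symm : E₁ →L[ℝ] E₁).le_opNorm _
    have hF : α * ‖A_F.symm x.snd‖ = ‖x.snd‖ := by
      rw [← hconf, A_F.apply_symm_apply]
    have h0F : (0:ℝ) ≤ ‖(A_F : E₂ →L[ℝ] E₂)‖ := norm_nonneg _
    have h0E : (0:ℝ) ≤ ‖(A_E.symm : E₁ →L[ℝ] E₁)‖ := norm_nonneg _
    have s1 : ‖(A_F : E₂ →L[ℝ] E₂)‖ * ‖A_E.symm x.fst‖ ≤ ‖x.fst‖ := by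
      calc ‖(A_F : E₂ →L[ℝ] E₂)‖ * ‖A_E.symm x.fst‖
          ≤ ‖(A_F : E₂ →L[ℝ] E₂)‖ * (‖(A_E.symm : E₁ →L[ℝ] E₁)‖ * ‖x.fst‖) :=
            mul_le_mul_of_nonneg_left hE h0F
        _ = ‖(A_F : E₂ →L[ℝ] E₂)‖ * ‖(A_E.symm : E₁ →L[ℝ] E₁)‖ * ‖x.fst‖ := by ring
        _ ≤ 1 * ‖x.fst‖ := mul_le_mul_of_nonneg_right hnorm (norm_nonneg _)
        _ = ‖x.fst‖ := one_mul _
    have s2 : ‖(A_F : E₂ →L[ℝ] E₂)‖ * ‖A_F.symm x.snd‖ ≤ ‖x.snd‖ := by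
      rw [← hF]; exact mul_le_mul_of_nonneg_right hAFle (norm_nonneg _)
    have t1 := pow_le_pow_left₀ (mul_nonneg h0F (norm_nonneg _)) s1 2
    have t2 := pow_le_pow_left₀ (mul_nonneg h0F (norm_nonneg _)) s2 2
    have e : (‖(A_F : E₂ →L[ℝ] E₂)‖ * ‖y‖) ^ 2
        = (‖(A_F : E₂ →L[ℝ] E₂)‖ * ‖A_E.symm x.fst‖) ^ 2
          + (‖(A_F : E₂ →L[ℝ] E₂)‖ * ‖A_F.symm x.snd‖) ^ 2 := by
      rw [mul_pow, mul_pow, mul_pow, hysq]; ring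
    have hsq : (‖(A_F : E₂ →L[ℝ] E₂)‖ * ‖y‖) ^ 2 ≤ ‖x‖ ^ 2 := by
      rw [e, hxsq]; exact add_le_add t1 t2
    exact (pow_le_pow_iff_left₀ (mul_nonneg h0F (norm_nonneg _)) (norm_nonneg x)
      two_ne_zero).mp hsq
  calc ‖LL A_E A_F (N y)‖ = ‖A_F (N y).snd‖ := h1
    _ ≤ ‖(A_F : E₂ →L[ℝ] E₂)‖ * ‖(N y).snd‖ := (A_F : E₂ →L[ℝ] E₂).le_opNorm _
    _ = ‖(A_F : E₂ →L[ℝ] E₂)‖ * ‖N y‖ := by rw [hNy]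
    _ ≤ ‖(A_F : E₂ →L[ℝ] E₂)‖ * (‖N‖ * ‖y‖) := by
        apply mul_le_mul_of_nonneg_left (N.le_opNorm y) (norm_nonneg _)
    _ = ‖N‖ * (‖(A_F : E₂ →L[ℝ] E₂)‖ * ‖y‖) := by ring
    _ ≤ ‖N‖ * ‖x‖ := mul_le_mul_of_nonneg_left hkey (norm_nonneg N)

noncomputable def pifst (d₁ d₂ : ℕ) :
    WithLp 2 (EuclideanSpace ℝ (Fin d₁) × EuclideanSpace ℝ (Fin d₂)) →L[ℝ]
      EuclideanSpace ℝ (Fin d₁) :=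
  (ContinuousLinearMap.fst ℝ (EuclideanSpace ℝ (Fin d₁)) (EuclideanSpace ℝ (Fin d₂))).comp
    (WithLp.prodContinuousLinearEquiv 2 ℝ (EuclideanSpace ℝ (Fin d₁))
      (EuclideanSpace ℝ (Fin d₂))).toContinuousLinearMap

lemma pifst_apply (x : P) : pifst d₁ d₂ x = x.fst := rfl

lemma fderiv_fst_eq (g : P → P) (hg : Differentiable ℝ g)
    (hgskew : ∀ x : P, (g x).fst = x.fst) (y : P) (x : P) :
    (fderiv ℝ g y x).fst = x.fst := by
  have hfun : ⇑(pifst d₁ d₂) ∘ g = ⇑(pifst d₁ d₂) := by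
    funext z; simp [Function.comp, pifst_apply, hgskew z]
  have h1 : HasFDerivAt (⇑(pifst d₁ d₂) ∘ g) ((pifst d₁ d₂).comp (fderiv ℝ g y)) y :=
    ((pifst d₁ d₂).hasFDerivAt.comp y (hg y).hasFDerivAt)
  rw [hfun] at h1
  have h2 : HasFDerivAt (⇑(pifst d₁ d₂)) (pifst d₁ d₂) y := (pifst d₁ d₂).hasFDerivAt
  haveI : ContinuousSMul ℝ P := IsBoundedSMul.continuousSMul
  have := h1.unique h2
  calc (fderiv ℝ g y x).fst = (pifst d₁ d₂).comp (fderiv ℝ g y) x := by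
        rw [ContinuousLinearMap.comp_apply, pifst_apply]
    _ = pifst d₁ d₂ x := by rw [this]
    _ = x.fst := pifst_apply x

lemma step (A_E : E₁ ≃L[ℝ] E₁) (A_F : E₂ ≃L[ℝ] E₂)
    (hnorm : ‖(A_F : E₂ →L[ℝ] E₂)‖ * ‖(A_E.symm : E₁ →L[ℝ] E₁)‖ ≤ 1)
    (α : ℝ) (hα : 0 < α) (hconf : ∀ v, ‖A_F v‖ = α * ‖v‖)
    (C : ℝ) (g : P → P) (hg : Differentiable ℝ g)
    (hgskew : ∀ x : P, (g x).fst = x.fst)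
    (hgC : ∀ y, ‖fderiv ℝ g y - ContinuousLinearMap.id ℝ _‖ ≤ C) :
    Differentiable ℝ (⇑(LL A_E A_F) ∘ g ∘ ⇑(LL A_E A_F).symm) ∧
    (∀ x : P, ((⇑(LL A_E A_F) ∘ g ∘ ⇑(LL A_E A_F).symm) x).fst = x.fst) ∧
    (∀ y, ‖fderiv ℝ (⇑(LL A_E A_F) ∘ g ∘ ⇑(LL A_E A_F).symm) y
        - ContinuousLinearMap.id ℝ _‖ ≤ C) := by
  set L := LL A_E A_F with hL
  have hdiff : Differentiable ℝ (⇑L ∘ g ∘ ⇑L.symm) :=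
    L.differentiable.comp (hg.comp L.symm.differentiable)
  refine ⟨hdiff, ?_, ?_⟩
  · intro x
    show (L (g (L.symm x))).fst = x.fst
    rw [LL_fst, hgskew, show ((LL A_E A_F).symm x).fst = A_E.symm x.fst from rfl,
      A_E.apply_symm_apply]
  · intro y
    set M := fderiv ℝ g (L.symm y) with hM
    have hder : HasFDerivAt (⇑L ∘ g ∘ ⇑L.symm)
        ((L : P →L[ℝ] P).comp (M.comp ((L.symm : P →L[ℝ] P)))) y := by
      have h1 : HasFDerivAt (⇑L.symm) (L.symm : P →L[ℝ] P) y := L.symm.hasFDerivAt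
      have h2 : HasFDerivAt g M (L.symm y) := (hg _).hasFDerivAt
      have h3 : HasFDerivAt (⇑L) (L : P →L[ℝ] P) (g (L.symm y)) := L.hasFDerivAt
      exact h3.comp y (h2.comp y h1)
    haveI : ContinuousSMul ℝ P := IsBoundedSMul.continuousSMul
    rw [hder.fderiv]
    have hrw : (L : P →L[ℝ] P).comp (M.comp ((L.symm : P →L[ℝ] P)))
        - ContinuousLinearMap.id ℝ P
        = ((L : P →L[ℝ] P).comp ((M - ContinuousLinearMap.id ℝ P).comp
            ((L.symm : P →L[ℝ] P)))) := by
      ext x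
      simp [ContinuousLinearMap.comp_apply, map_sub]
    rw [hrw]
    have hN : ∀ x : P, ((M - ContinuousLinearMap.id ℝ P) x).fst = 0 := by
      intro x
      have : (M x).fst = x.fst := fderiv_fst_eq g hg hgskew _ x
      simp [ContinuousLinearMap.sub_apply, this]
    calc ‖(L : P →L[ℝ] P).comp ((M - ContinuousLinearMap.id ℝ P).comp
            ((L.symm : P →L[ℝ] P)))‖
        ≤ ‖M - ContinuousLinearMap.id ℝ P‖ := by
          have h := conj_norm_le A_E A_F hnorm α hα hconf
            (M - ContinuousLinearMap.id ℝ P) hN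
          rw [ContinuousLinearMap.comp_assoc] at h
          exact h
      _ ≤ C := hgC _

theorem stmt12 (d₁ d₂ : ℕ)
    (A_E : EuclideanSpace ℝ (Fin d₁) ≃L[ℝ] EuclideanSpace ℝ (Fin d₁))
    (A_F : EuclideanSpace ℝ (Fin d₂) ≃L[ℝ] EuclideanSpace ℝ (Fin d₂))
    (hnorm : ‖(A_F : EuclideanSpace ℝ (Fin d₂) →L[ℝ] EuclideanSpace ℝ (Fin d₂))‖ *
        ‖(A_E.symm : EuclideanSpace ℝ (Fin d₁) →L[ℝ] EuclideanSpace ℝ (Fin d₁))‖ ≤ 1)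
    (α : ℝ) (hα : 0 < α) (hconf : ∀ v, ‖A_F v‖ = α * ‖v‖)
    (φ φinv : WithLp 2 (EuclideanSpace ℝ (Fin d₁) × EuclideanSpace ℝ (Fin d₂)) →
        WithLp 2 (EuclideanSpace ℝ (Fin d₁) × EuclideanSpace ℝ (Fin d₂)))
    (hφ : Differentiable ℝ φ) (hφinv : Differentiable ℝ φinv)
    (hskew : ∀ x, ((WithLp.equiv 2 _) (φ x)).1 = ((WithLp.equiv 2 _) x).1)
    (hli : Function.LeftInverse φinv φ) (hri : Function.RightInverse φinv φ)
    (A Ainv : WithLp 2 (EuclideanSpace ℝ (Fin d₁) × EuclideanSpace ℝ (Fin d₂)) →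
        WithLp 2 (EuclideanSpace ℝ (Fin d₁) × EuclideanSpace ℝ (Fin d₂)))
    (hA : ∀ x, A x = (WithLp.equiv 2 _).symm
        (A_E ((WithLp.equiv 2 _) x).1, A_F ((WithLp.equiv 2 _) x).2))
    (hAinv : ∀ x, Ainv x = (WithLp.equiv 2 _).symm
        (A_E.symm ((WithLp.equiv 2 _) x).1, A_F.symm ((WithLp.equiv 2 _) x).2))
    (ℓ : ℕ) (C : ℝ)
    (hC : ∀ y, ‖fderiv ℝ φinv y - ContinuousLinearMap.id ℝ _‖ ≤ C) :
    ∀ x, ‖fderiv ℝ (A^[ℓ] ∘ φinv ∘ Ainv^[ℓ]) x - ContinuousLinearMap.id ℝ _‖ ≤ C := by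
  have hAL : A = ⇑(LL A_E A_F) := by
    funext x
    rw [hA x, LL_apply]
    rfl
  have hAinvL : Ainv = ⇑(LL A_E A_F).symm := by
    funext x
    rw [hAinv x, LL_symm_apply]
    rfl
  have hinvskew : ∀ x, (φinv x).fst = x.fst := by
    intro x
    have h := hskew (φinv x)
    change (φ (φinv x)).fst = (φinv x).fst at h
    rw [hri x] at h
    exact h.symm
  have key : ∀ n : ℕ, Differentiable ℝ (A^[n] ∘ φinv ∘ Ainv^[n]) ∧
      (∀ x, ((A^[n] ∘ φinv ∘ Ainv^[n]) x).fst = x.fst) ∧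
      (∀ y, ‖fderiv ℝ (A^[n] ∘ φinv ∘ Ainv^[n]) y - ContinuousLinearMap.id ℝ _‖ ≤ C) := by
    intro n
    induction n with
    | zero =>
      simp only [Function.iterate_zero, Function.comp_id, Function.id_comp]
      exact ⟨hφinv, hinvskew, hC⟩
    | succ n ih =>
      have heq : A^[n+1] ∘ φinv ∘ Ainv^[n+1]
          = ⇑(LL A_E A_F) ∘ (A^[n] ∘ φinv ∘ Ainv^[n]) ∘ ⇑(LL A_E A_F).symm := by
        rw [Function.iterate_succ' A, Function.iterate_succ Ainv]
        funext x
        simp only [Function.comp_apply, hAL, hAinvL]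
      rw [heq]
      exact step A_E A_F hnorm α hα hconf C _ ih.1 ih.2.1 ih.2.2
  exact (key ℓ).2.2
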